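/- Let H be a real Hilbert space, ℓ ≥ 0, and let f : H → ℝ be a convex, lower semicontinuous function. If ‖x‖ − ℓ ≤ ‖prox_f(x + y) − y‖ for all x, y ∈ H, then f is ℓ-Lipschitz. -/

import Mathlib

open scoped InnerProductSpace
noncomputable section

variable {H : Type*} [NormedAddCommGroup H] [InnerProductSpace ℝ H] [CompleteSpace H]

/-- `p` is the proximal point of the real-valued function `f` at `x`,
i.e. `p` minimizes `y ↦ f y + (1/2)‖x - y‖²`. -/
def IsProxR (f : H → ℝ) (x p : H) : Prop :=
  ∀ y : H, f p + (1:ℝ)/2 * ‖x - p‖ ^ 2 ≤ f y + (1:ℝ)/2 * ‖x - y‖ ^ 2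
lemma prox_subgrad (f : H → ℝ) (hconv : ConvexOn ℝ Set.univ f)
    {x p : H} (hp : IsProxR f x p) (z : H) :
    f p + ⟪x - p, z - p⟫_ℝ ≤ f z := by
  have key : ∀ t : ℝ, 0 < t → t ≤ 1 →
      f p + ⟪x - p, z - p⟫_ℝ ≤ f z + t / 2 * ‖z - p‖ ^ 2 := by
    intro t ht ht1
    have h1 := hp (p + t • (z - p))
    have hcvx : f (p + t • (z - p)) ≤ (1 - t) * f p + t * f z := by
      have h2 := hconv.2 (Set.mem_univ p) (Set.mem_univ z) (by linarith : (0:ℝ) ≤ 1 - t)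
        ht.le (by ring)
      have he : (1 - t) • p + t • z = p + t • (z - p) := by module
      rw [he] at h2
      simpa [smul_eq_mul] using h2
    have hnorm : ‖x - (p + t • (z - p))‖ ^ 2
        = ‖x - p‖ ^ 2 - 2 * t * ⟪x - p, z - p⟫_ℝ + t ^ 2 * ‖z - p‖ ^ 2 := by
      have he : x - (p + t • (z - p)) = (x - p) - t • (z - p) := by module
      rw [he, norm_sub_sq_real, real_inner_smul_right, norm_smul]
      simp [Real.norm_eq_abs, mul_pow, sq_abs]
      ring
    rw [hnorm] at h1
    -- h1 : f p + 1/2 ‖x-p‖² ≤ f (p + t•(z-p)) + 1/2 (...)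
    by_contra hcon
    push_neg at hcon
    nlinarith [mul_pos ht (by linarith : (0:ℝ) < f p + ⟪x - p, z - p⟫_ℝ - (f z + t / 2 * ‖z - p‖ ^ 2))]
  refine le_of_forall_pos_le_add ?_
  intro ε hε
  set S := ‖z - p‖ ^ 2 with hS
  have hS0 : 0 ≤ S := by positivity
  have hS1 : (0:ℝ) < S + 1 := by linarith
  set t := min 1 (ε / (S + 1)) with htdef
  have ht : 0 < t := lt_min one_pos (by positivity)
  have ht1 : t ≤ 1 := min_le_left _ _
  have hts : t * (S + 1) ≤ ε := by
    have := min_le_right 1 (ε / (S + 1))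
    calc t * (S + 1) ≤ (ε / (S + 1)) * (S + 1) := by
          exact mul_le_mul_of_nonneg_right this hS1.le
      _ = ε := by field_simp
  have hk := key t ht ht1
  have htS : 0 ≤ t * S := mul_nonneg ht.le hS0
  linarith [hk]

lemma prox_lip (f : H → ℝ) (hconv : ConvexOn ℝ Set.univ f)
    {ℓ : ℝ} {x p : H} (hp : IsProxR f x p) (hg : ‖x - p‖ ≤ ℓ) (z : H) :
    f p ≤ f z + ℓ * ‖p - z‖ := by
  have hs := prox_subgrad f hconv hp z
  have hi : ⟪x - p, p - z⟫_ℝ ≤ ℓ * ‖p - z‖ := by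
    calc ⟪x - p, p - z⟫_ℝ ≤ ‖x - p‖ * ‖p - z‖ := real_inner_le_norm _ _
      _ ≤ ℓ * ‖p - z‖ := mul_le_mul_of_nonneg_right hg (norm_nonneg _)
  have : ⟪x - p, z - p⟫_ℝ = -⟪x - p, p - z⟫_ℝ := by
    rw [← inner_neg_right]; congr 1; abel
  linarith [hs, hi, this ▸ hs]

lemma prox_nonexp (f : H → ℝ) (hconv : ConvexOn ℝ Set.univ f)
    {a b pa pb : H} (ha : IsProxR f a pa) (hb : IsProxR f b pb) :
    ‖(a - pa) - (b - pb)‖ ≤ ‖a - b‖ := by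
  have h1 := prox_subgrad f hconv ha pb
  have h2 := prox_subgrad f hconv hb pa
  set D := (a - pa) - (b - pb) with hD
  have hsum : ⟪a - pa, pb - pa⟫_ℝ + ⟪b - pb, pa - pb⟫_ℝ ≤ 0 := by linarith
  have hDpq : 0 ≤ ⟪D, pa - pb⟫_ℝ := by
    have he : ⟪D, pa - pb⟫_ℝ = -⟪a - pa, pb - pa⟫_ℝ - ⟪b - pb, pa - pb⟫_ℝ := by
      have hneg : (pb - pa) = -(pa - pb) := by abel
      rw [hD, inner_sub_left, hneg, inner_neg_right]
      ring
    linarith [he, hsum]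
  have hDab : D = (a - b) - (pa - pb) := by rw [hD]; abel
  have hsq : ‖D‖ ^ 2 ≤ ‖D‖ * ‖a - b‖ := by
    have hns : ‖D‖ ^ 2 = ⟪D, D⟫_ℝ := (real_inner_self_eq_norm_sq D).symm
    have hsplit : ⟪D, D⟫_ℝ = ⟪D, a - b⟫_ℝ - ⟪D, pa - pb⟫_ℝ := by
      nth_rewrite 2 [hDab]
      rw [inner_sub_right]
    have hcs := real_inner_le_norm D (a - b)
    linarith [hns, hsplit, hcs, hDpq]
  by_contra hcon
  push_neg at hcon
  nlinarith [norm_nonneg D, norm_nonneg (a - b)]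

/-- If `‖x‖ - ℓ ≤ ‖prox_f (x + y) - y‖` for all `x, y`, then the convex lower
semicontinuous function `f : H → ℝ` is `ℓ`-Lipschitz. -/
theorem lipschitz_of_norm_sub_le_prox_norm
    (ℓ : ℝ) (hℓ : 0 ≤ ℓ) (f : H → ℝ)
    (hconv : ConvexOn ℝ Set.univ f) (hlsc : LowerSemicontinuous f)
    (proxf : H → H) (hproxf : ∀ x, IsProxR f x (proxf x))
    (h : ∀ x y : H, ‖x‖ - ℓ ≤ ‖proxf (x + y) - y‖) :
    ∀ u v : H, |f u - f v| ≤ ℓ * ‖u - v‖ := by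
  -- displacement bound
  have hdisp : ∀ w : H, ‖w - proxf w‖ ≤ ℓ := by
    intro w
    have := h (w - proxf w) (proxf w)
    rw [sub_add_cancel] at this
    simp at this
    linarith
  -- one-sided Lipschitz bound
  have main : ∀ u v : H, f u ≤ f v + ℓ * ‖u - v‖ := by
    intro u v
    by_contra hcon
    push_neg at hcon
    set c := f v + ℓ * ‖u - v‖ with hc
    set m := (c + f u) / 2 with hm
    have hmu : m < f u := by rw [hm]; linarith
    have hcm : c < m := by rw [hm]; linarith
    obtain ⟨ε, hε, hball⟩ := Metric.eventually_nhds_iff.mp (hlsc u m hmu)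
    -- choose θ close to 1
    set r : ℝ := min (ε / (ℓ + 1)) ((m - c) / (ℓ ^ 2 + 1)) with hr
    have hr0 : 0 < r :=
      lt_min (by positivity) (div_pos (by linarith) (by positivity))
    set s : ℝ := min r 1 with hs
    have hs0 : 0 < s := lt_min hr0 one_pos
    have hs1 : s ≤ 1 := min_le_right _ _
    set θ : ℝ := 1 - s / 2 with hθ
    have hθ0 : 0 ≤ θ := by rw [hθ]; linarith
    have hθ1 : θ < 1 := by rw [hθ]; linarith
    -- the contraction
    set F : H → H := fun x => u + θ • (x - proxf x) with hF
    have hlip : LipschitzWith ⟨θ, hθ0⟩ F := by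
      apply LipschitzWith.of_dist_le_mul
      intro a b
      rw [dist_eq_norm, dist_eq_norm]
      have : F a - F b = θ • ((a - proxf a) - (b - proxf b)) := by
        simp only [hF, smul_sub]; abel
      rw [this, norm_smul, Real.norm_eq_abs, abs_of_nonneg hθ0]
      exact mul_le_mul_of_nonneg_left
        (prox_nonexp f hconv (hproxf a) (hproxf b)) hθ0
    have hcontr : ContractingWith ⟨θ, hθ0⟩ F := ⟨by exact_mod_cast hθ1, hlip⟩
    obtain ⟨x, hfix, -⟩ := hcontr.exists_fixedPoint 0 (edist_ne_top _ _)
    set p := proxf x with hp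
    have hfix' : u + θ • (x - p) = x := by
      have h0 := hfix
      simp only [Function.IsFixedPt, hF] at h0
      rw [hp]; exact h0
    -- p is close to u
    have hpu : p - u = -((1 - θ) • (x - p)) := by
      have hux : u = x - θ • (x - p) := eq_sub_iff_add_eq.mpr hfix'
      rw [hux]; module
    have hpun : ‖p - u‖ ≤ (1 - θ) * ℓ := by
      rw [hpu, norm_neg, norm_smul, Real.norm_eq_abs, abs_of_nonneg (by linarith : (0:ℝ) ≤ 1 - θ)]
      exact mul_le_mul_of_nonneg_left (hdisp x) (by linarith)
    have h1θ : 1 - θ = s / 2 := by rw [hθ]; ring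
    -- p in the ball
    have hsr : s ≤ r := min_le_left _ _
    have hrε : r ≤ ε / (ℓ + 1) := min_le_left _ _
    have hrm : r ≤ (m - c) / (ℓ ^ 2 + 1) := min_le_right _ _
    have hball_p : ‖p - u‖ < ε := by
      have h2 : s * (ℓ + 1) ≤ ε := by
        calc s * (ℓ + 1) ≤ (ε / (ℓ + 1)) * (ℓ + 1) :=
              mul_le_mul_of_nonneg_right (le_trans hsr hrε) (by linarith)
          _ = ε := by field_simp
      calc ‖p - u‖ ≤ (1 - θ) * ℓ := hpun
        _ = s / 2 * ℓ := by rw [h1θ]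
        _ < ε := by nlinarith
    have hfp_big : m < f p := by
      apply hball
      rw [dist_eq_norm]
      exact hball_p
    -- but f p is small
    have hfp_small : f p ≤ c + ℓ * ‖p - u‖ := by
      have := prox_lip f hconv (hproxf x) (hdisp x) v
      rw [← hp] at this
      have htri : ‖p - v‖ ≤ ‖p - u‖ + ‖u - v‖ := by
        have := norm_sub_le_norm_sub_add_norm_sub p u v
        linarith [this]
      calc f p ≤ f v + ℓ * ‖p - v‖ := this
        _ ≤ f v + ℓ * (‖p - u‖ + ‖u - v‖) :=
            by nlinarith [mul_le_mul_of_nonneg_left htri hℓ]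
        _ = c + ℓ * ‖p - u‖ := by rw [hc]; ring
    have hfinal : f p < m := by
      have h3 : s * (ℓ ^ 2 + 1) ≤ m - c := by
        calc s * (ℓ ^ 2 + 1) ≤ ((m - c) / (ℓ ^ 2 + 1)) * (ℓ ^ 2 + 1) :=
              mul_le_mul_of_nonneg_right (le_trans hsr hrm) (by positivity)
          _ = m - c := by field_simp
      have h4 : ℓ * ‖p - u‖ ≤ ℓ * ((1 - θ) * ℓ) :=
        mul_le_mul_of_nonneg_left hpun hℓ
      have h5 : ℓ * ((1 - θ) * ℓ) = s / 2 * ℓ ^ 2 := by rw [h1θ]; ring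
      have h6 : f p ≤ c + s / 2 * ℓ ^ 2 := by
        calc f p ≤ c + ℓ * ‖p - u‖ := hfp_small
          _ ≤ c + ℓ * ((1 - θ) * ℓ) := add_le_add_right h4 c
          _ = c + s / 2 * ℓ ^ 2 := by rw [h5]
      have h7 : 0 ≤ s * ℓ ^ 2 := mul_nonneg hs0.le (sq_nonneg ℓ)
      linarith
    linarith
  intro u v
  rw [abs_sub_le_iff]
  constructor
  · linarith [main u v]
  · rw [norm_sub_rev]
    linarith [main v u]
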